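/- Let p, q : ℕ. On ℝ^p × ℝ^q define the symmetric bilinear form b((x,y),(x',y')) = ∑_i x i * x' i − ∑_j y j * y' j. For X ∈ Matrix (Fin p) (Fin q) ℝ let W_X = {(X *ᵥ w, w) | w ∈ (Fin q → ℝ)}, an ℝ-subspace of ℝ^p × ℝ^q. Then: (a) b(v,v) < 0 for every nonzero v ∈ W_X if and only if 1 − Xᵀ * X is positive definite; (b) any ℝ-subspace W of ℝ^p × ℝ^q with b(v,v) < 0 for all nonzero v ∈ W has finrank W ≤ q, and if finrank W = q then there is a unique X with W = W_X. -/

import Mathlib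

open Matrix

private lemma stmt15_key {p q : ℕ} (X : Matrix (Fin p) (Fin q) ℝ) (w : Fin q → ℝ) :
    w ⬝ᵥ ((1 - X.transpose * X) *ᵥ w)
      = (∑ j, w j * w j) - ∑ i, (X *ᵥ w) i * (X *ᵥ w) i := by
  rw [sub_mulVec, one_mulVec, dotProduct_sub, ← Matrix.mulVec_mulVec,
    dotProduct_mulVec, vecMul_transpose]
  rfl

private lemma stmt15_uniq {p q : ℕ} (Y Z : Matrix (Fin p) (Fin q) ℝ)
    (h : {v : (Fin p → ℝ) × (Fin q → ℝ) | ∃ w, v = (Y *ᵥ w, w)}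
      = {v | ∃ w, v = (Z *ᵥ w, w)}) : Y = Z := by
  have hv : ∀ w, Y *ᵥ w = Z *ᵥ w := by
    intro w
    have : ((Y *ᵥ w, w) : (Fin p → ℝ) × (Fin q → ℝ)) ∈
        {v : (Fin p → ℝ) × (Fin q → ℝ) | ∃ w, v = (Z *ᵥ w, w)} := by
      rw [← h]; exact ⟨w, rfl⟩
    obtain ⟨w', hw'⟩ := this
    have h2 : w = w' := congrArg Prod.snd hw'
    have h1 : Y *ᵥ w = Z *ᵥ w' := congrArg Prod.fst hw'
    rw [h1, ← h2]
  have : Matrix.toLin' Y = Matrix.toLin' Z := by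
    apply LinearMap.ext; intro w
    simpa [Matrix.toLin'_apply] using hv w
  exact Matrix.toLin'.injective this

/-- Real bounded symmetric domain of `SO(p,q)`: a graph `W_X = {(X *ᵥ w, w)}` is negative
definite for the form `b` of signature `(p,q)` iff `1 − Xᵀ X` is positive definite, and any
`b`-negative definite subspace has dimension at most `q`, being the graph of a unique `X`
when the dimension equals `q`. -/
theorem stmt_15 (p q : ℕ)
    (b : ((Fin p → ℝ) × (Fin q → ℝ)) → ((Fin p → ℝ) × (Fin q → ℝ)) → ℝ)
    (hb : ∀ v v', b v v' = (∑ i, v.1 i * v'.1 i) - ∑ j, v.2 j * v'.2 j) :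
    (∀ X : Matrix (Fin p) (Fin q) ℝ,
      (∀ v ∈ {v : (Fin p → ℝ) × (Fin q → ℝ) | ∃ w, v = (X *ᵥ w, w)},
          v ≠ 0 → b v v < 0) ↔ (1 - X.transpose * X).PosDef) ∧
    (∀ W : Submodule ℝ ((Fin p → ℝ) × (Fin q → ℝ)),
      (∀ v ∈ W, v ≠ 0 → b v v < 0) →
        Module.finrank ℝ W ≤ q ∧
        (Module.finrank ℝ W = q →
          ∃! X : Matrix (Fin p) (Fin q) ℝ,
            (W : Set ((Fin p → ℝ) × (Fin q → ℝ))) = {v | ∃ w, v = (X *ᵥ w, w)})) := by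
  constructor
  · -- part (a)
    intro X
    have hbv : ∀ w : Fin q → ℝ,
        b (X *ᵥ w, w) (X *ᵥ w, w) = -(w ⬝ᵥ ((1 - X.transpose * X) *ᵥ w)) := by
      intro w
      rw [hb, stmt15_key]
      ring
    constructor
    · intro h
      have hherm : (1 - X.transpose * X).IsHermitian := by
        have := Matrix.isHermitian_conjTranspose_mul_self X
        rw [Matrix.conjTranspose_eq_transpose_of_trivial] at this
        exact Matrix.isHermitian_one.sub this
      refine Matrix.PosDef.of_dotProduct_mulVec_pos hherm fun w hw => ?_
      have hne : ((X *ᵥ w, w) : (Fin p → ℝ) × (Fin q → ℝ)) ≠ 0 := by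
        intro hc
        exact hw (congrArg Prod.snd hc)
      have := h (X *ᵥ w, w) ⟨w, rfl⟩ hne
      rw [hbv] at this
      simpa using (by linarith : (0:ℝ) < w ⬝ᵥ ((1 - X.transpose * X) *ᵥ w))
    · rintro h v ⟨w, rfl⟩ hne
      have hw : w ≠ 0 := by
        intro hc
        apply hne
        subst hc
        simp
      have := h.dotProduct_mulVec_pos hw
      simp only [star_trivial] at this
      rw [hbv]
      linarith
  · -- part (b)
    intro W hW
    have hzero : ∀ v ∈ W, v.2 = 0 → v = 0 := by
      intro v hv h2
      by_contra hne
      have := hW v hv hne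
      rw [hb, h2] at this
      have h1 : (0:ℝ) ≤ ∑ i, v.1 i * v.1 i :=
        Finset.sum_nonneg fun i _ => mul_self_nonneg _
      simp only [Pi.zero_apply, mul_zero, Finset.sum_const_zero] at this
      linarith
    set f : W →ₗ[ℝ] (Fin q → ℝ) :=
      (LinearMap.snd ℝ (Fin p → ℝ) (Fin q → ℝ)).comp W.subtype with hf
    have hinj : Function.Injective f := by
      intro a c hac
      have hmem : ((a : (Fin p → ℝ) × (Fin q → ℝ)) - c) ∈ W := W.sub_mem a.2 c.2
      have h2 : ((a : (Fin p → ℝ) × (Fin q → ℝ)) - c).2 = 0 := by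
        have : (a : (Fin p → ℝ) × (Fin q → ℝ)).2 = (c : (Fin p → ℝ) × (Fin q → ℝ)).2 := hac
        simp [this]
      have := hzero _ hmem h2
      exact Subtype.ext (sub_eq_zero.mp this)
    have hle : Module.finrank ℝ W ≤ q := by
      have := LinearMap.finrank_le_finrank_of_injective hinj
      rwa [Module.finrank_fin_fun] at this
    refine ⟨hle, fun hrank => ?_⟩
    have heq : Module.finrank ℝ W = Module.finrank ℝ (Fin q → ℝ) := by
      rw [hrank, Module.finrank_fin_fun]
    let e : W ≃ₗ[ℝ] (Fin q → ℝ) := LinearMap.linearEquivOfInjective f hinj heq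
    have he : ∀ x : W, e x = (x : (Fin p → ℝ) × (Fin q → ℝ)).2 := fun x => rfl
    let g : (Fin q → ℝ) →ₗ[ℝ] (Fin p → ℝ) :=
      (LinearMap.fst ℝ (Fin p → ℝ) (Fin q → ℝ)).comp (W.subtype.comp e.symm.toLinearMap)
    set X : Matrix (Fin p) (Fin q) ℝ := LinearMap.toMatrix' g with hX
    have hXg : ∀ w, X *ᵥ w = ((e.symm w : W) : (Fin p → ℝ) × (Fin q → ℝ)).1 := by
      intro w
      rw [← Matrix.toLin'_apply, hX, Matrix.toLin'_toMatrix']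
      rfl
    have hsnd : ∀ w, ((e.symm w : W) : (Fin p → ℝ) × (Fin q → ℝ)).2 = w := by
      intro w
      rw [← he]
      simp
    have hset : (W : Set ((Fin p → ℝ) × (Fin q → ℝ))) = {v | ∃ w, v = (X *ᵥ w, w)} := by
      ext v
      constructor
      · intro hv
        refine ⟨v.2, ?_⟩
        have hes : e.symm v.2 = ⟨v, hv⟩ := by
          apply e.injective
          rw [he, he]
          exact hsnd v.2
        have h1 : X *ᵥ v.2 = v.1 := by rw [hXg, hes]
        exact Prod.ext h1.symm rfl
      · rintro ⟨w, rfl⟩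
        have : ((X *ᵥ w, w) : (Fin p → ℝ) × (Fin q → ℝ)) = ↑(e.symm w) :=
          Prod.ext (hXg w) ((hsnd w).symm)
        rw [this]
        exact (e.symm w).2
    exact ⟨X, hset, fun Y hY => stmt15_uniq Y X (by rw [← hY]; exact hset)⟩
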